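/- In a latin square S (a set of triples (r,c,l) such that any two distinct triples differ in at least two coordinates, with every row-column pair, row-letter pair, and column-letter pair occurring exactly once), six distinct elements x, x', x'', y, y', y'' induce a complete bipartite subgraph K_{3,3} of the latin square graph Γ(S) with parts {x,x',x''} and {y,y',y''} if and only if there exist pairwise distinct r1,r2,r3, pairwise distinct c1,c2,c3, and pairwise distinct l1,l2,l3 such that {x,x',x''} = {(r1,c2,l3),(r2,c3,l1),(r3,c1,l2)} and {y,y',y''} = {(r2,c1,l3),(r3,c2,l1),(r1,c3,l2)}. -/
import Mathlib


/-- A latin square as a set of triples: every pair of coordinates determines a unique triple. -/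
def IsLatinSquare {R C L : Type*} (S : Set (R × C × L)) : Prop :=
  (∀ r c, ∃! l, (r, c, l) ∈ S) ∧ (∀ r l, ∃! c, (r, c, l) ∈ S) ∧ (∀ c l, ∃! r, (r, c, l) ∈ S)

/-- Adjacency in the latin square graph: distinct triples agreeing in some coordinate. -/
def LSAdj {R C L : Type*} (u v : R × C × L) : Prop :=
  u ≠ v ∧ (u.1 = v.1 ∨ u.2.1 = v.2.1 ∨ u.2.2 = v.2.2)

section
variable {R C L : Type*} {S : Set (R × C × L)}

lemma eq_of_rc (hS : IsLatinSquare S) {u v : R × C × L} (hu : u ∈ S) (hv : v ∈ S)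
    (h1 : u.1 = v.1) (h2 : u.2.1 = v.2.1) : u = v := by
  have h3 : u.2.2 = v.2.2 := (hS.1 u.1 u.2.1).unique hu (by rw [h1, h2]; exact hv)
  exact Prod.ext h1 (Prod.ext h2 h3)

lemma eq_of_rl (hS : IsLatinSquare S) {u v : R × C × L} (hu : u ∈ S) (hv : v ∈ S)
    (h1 : u.1 = v.1) (h2 : u.2.2 = v.2.2) : u = v := by
  have h3 : u.2.1 = v.2.1 := (hS.2.1 u.1 u.2.2).unique hu (by rw [h1, h2]; exact hv)
  exact Prod.ext h1 (Prod.ext h3 h2)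

lemma eq_of_cl (hS : IsLatinSquare S) {u v : R × C × L} (hu : u ∈ S) (hv : v ∈ S)
    (h1 : u.2.1 = v.2.1) (h2 : u.2.2 = v.2.2) : u = v := by
  have h3 : u.1 = v.1 := (hS.2.2 u.2.1 u.2.2).unique hu (by rw [h1, h2]; exact hv)
  exact Prod.ext h3 (Prod.ext h1 h2)

lemma core (hS : IsLatinSquare S) {x x' x'' ya yb yc : R × C × L}
    (hx : x ∈ S) (hya : ya ∈ S) (hyb : yb ∈ S) (hyc : yc ∈ S)
    (hxya : x ≠ ya) (hxyb : x ≠ yb) (hxyc : x ≠ yc)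
    (hX1 : x.1 ≠ x'.1) (hX2 : x.2.1 ≠ x'.2.1) (hX3 : x.2.2 ≠ x'.2.2)
    (hX4 : x.1 ≠ x''.1) (hX5 : x.2.1 ≠ x''.2.1) (hX6 : x.2.2 ≠ x''.2.2)
    (hX7 : x'.1 ≠ x''.1) (hX8 : x'.2.1 ≠ x''.2.1) (hX9 : x'.2.2 ≠ x''.2.2)
    (hY1 : ya.1 ≠ yb.1) (hY2 : ya.2.1 ≠ yb.2.1) (hY3 : ya.2.2 ≠ yb.2.2)
    (hY4 : ya.1 ≠ yc.1) (hY5 : ya.2.1 ≠ yc.2.1) (hY6 : ya.2.2 ≠ yc.2.2)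
    (hY7 : yb.1 ≠ yc.1) (hY8 : yb.2.1 ≠ yc.2.1) (hY9 : yb.2.2 ≠ yc.2.2)
    (hxa : x.1 = ya.1) (hxb : x.2.1 = yb.2.1) (hxc : x.2.2 = yc.2.2)
    (ha' : x'.1 = ya.1 ∨ x'.2.1 = ya.2.1 ∨ x'.2.2 = ya.2.2)
    (hb' : x'.1 = yb.1 ∨ x'.2.1 = yb.2.1 ∨ x'.2.2 = yb.2.2)
    (hc' : x'.1 = yc.1 ∨ x'.2.1 = yc.2.1 ∨ x'.2.2 = yc.2.2)
    (ha'' : x''.1 = ya.1 ∨ x''.2.1 = ya.2.1 ∨ x''.2.2 = ya.2.2)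
    (hb'' : x''.1 = yb.1 ∨ x''.2.1 = yb.2.1 ∨ x''.2.2 = yb.2.2)
    (hc'' : x''.1 = yc.1 ∨ x''.2.1 = yc.2.1 ∨ x''.2.2 = yc.2.2) :
    ∃ r1 r2 r3 : R, ∃ c1 c2 c3 : C, ∃ l1 l2 l3 : L,
      r1 ≠ r2 ∧ r1 ≠ r3 ∧ r2 ≠ r3 ∧
      c1 ≠ c2 ∧ c1 ≠ c3 ∧ c2 ≠ c3 ∧
      l1 ≠ l2 ∧ l1 ≠ l3 ∧ l2 ≠ l3 ∧
      ({x, x', x''} : Set (R × C × L)) =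
        {(r1, c2, l3), (r2, c3, l1), (r3, c1, l2)} ∧
      ({ya, yb, yc} : Set (R × C × L)) =
        {(r2, c1, l3), (r3, c2, l1), (r1, c3, l2)} := by
  have d12 : x.1 ≠ yc.1 := fun h => hxyc (eq_of_rl hS hx hyc h hxc)
  have d13 : x.1 ≠ yb.1 := fun h => hxyb (eq_of_rc hS hx hyb h hxb)
  have d23 : yc.1 ≠ yb.1 := Ne.symm hY7
  have e12 : yc.2.1 ≠ x.2.1 := fun h => hxyc (eq_of_cl hS hx hyc h.symm hxc)
  have e13 : yc.2.1 ≠ ya.2.1 := Ne.symm hY5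
  have e23 : x.2.1 ≠ ya.2.1 := fun h => hxya (eq_of_rc hS hx hya hxa h)
  have f12 : yb.2.2 ≠ ya.2.2 := Ne.symm hY3
  have f13 : yb.2.2 ≠ x.2.2 := fun h => hxyb (eq_of_cl hS hx hyb hxb h.symm)
  have f23 : ya.2.2 ≠ x.2.2 := fun h => hxya (eq_of_rl hS hx hya hxa h.symm)
  refine ⟨x.1, yc.1, yb.1, yc.2.1, x.2.1, ya.2.1, yb.2.2, ya.2.2, x.2.2,
    d12, d13, d23, e12, e13, e23, f12, f13, f23, ?_, ?_⟩ <;>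
  · rcases hc' with hA | hA | hA
    · rcases hb' with h | h | h
      · exact absurd (hA.symm.trans h) (Ne.symm hY7)
      · exact absurd (h.trans hxb.symm) (Ne.symm hX2)
      rcases ha' with h' | h' | h'
      · exact absurd (hA.symm.trans h') (Ne.symm hY4)
      swap
      · exact absurd (h'.symm.trans h) hY3
      rcases hc'' with hD | hD | hD
      · exact absurd (hD.trans hA.symm) (Ne.symm hX7)
      swap
      · exact absurd (hD.trans hxc.symm) (Ne.symm hX6)
      rcases hb'' with hE | hE | hE
      swap
      · exact absurd (hE.trans hxb.symm) (Ne.symm hX5)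
      swap
      · exact absurd (hE.trans h.symm) (Ne.symm hX9)
      rcases ha'' with hF | hF | hF
      · exact absurd (hE.symm.trans hF) (Ne.symm hY1)
      · exact absurd (hF.trans h'.symm) (Ne.symm hX8)
      have e1 : x' = (yc.1, ya.2.1, yb.2.2) := Prod.ext hA (Prod.ext h' h)
      have e2 : x'' = (yb.1, yc.2.1, ya.2.2) := Prod.ext hE (Prod.ext hD hF)
      have ea : (x.1, ya.2.1, ya.2.2) = ya := by rw [hxa]
      have eb : (yb.1, x.2.1, yb.2.2) = yb := by rw [hxb]
      have ec : (yc.1, yc.2.1, x.2.2) = yc := by rw [hxc]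
      first
        | (rw [e1, e2])
        | (rw [ec, eb, ea]; ext p;
           simp only [Set.mem_insert_iff, Set.mem_singleton_iff]; tauto)
    · rcases ha' with h' | h' | h'
      · exact absurd (h'.trans hxa.symm) (Ne.symm hX1)
      · exact absurd (hA.symm.trans h') e13
      rcases hb' with h | h | h
      swap
      · exact absurd (h.trans hxb.symm) (Ne.symm hX2)
      swap
      · exact absurd (h'.symm.trans h) hY3
      rcases hc'' with hD | hD | hD
      swap
      · exact absurd (hD.trans hA.symm) (Ne.symm hX8)
      swap
      · exact absurd (hD.trans hxc.symm) (Ne.symm hX6)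
      rcases hb'' with hE | hE | hE
      · exact absurd (hD.symm.trans hE) (Ne.symm hY7)
      · exact absurd (hE.trans hxb.symm) (Ne.symm hX5)
      rcases ha'' with hF | hF | hF
      · exact absurd (hD.symm.trans hF) (Ne.symm hY4)
      swap
      · exact absurd (hF.trans h'.symm) (Ne.symm hX9)
      have e1 : x' = (yb.1, yc.2.1, ya.2.2) := Prod.ext h (Prod.ext hA h')
      have e2 : x'' = (yc.1, ya.2.1, yb.2.2) := Prod.ext hD (Prod.ext hF hE)
      have ea : (x.1, ya.2.1, ya.2.2) = ya := by rw [hxa]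
      have eb : (yb.1, x.2.1, yb.2.2) = yb := by rw [hxb]
      have ec : (yc.1, yc.2.1, x.2.2) = yc := by rw [hxc]
      first
        | (rw [e1, e2]; ext p;
           simp only [Set.mem_insert_iff, Set.mem_singleton_iff]; tauto)
        | (rw [ec, eb, ea]; ext p;
           simp only [Set.mem_insert_iff, Set.mem_singleton_iff]; tauto)
    · exact absurd (hA.trans hxc.symm) (Ne.symm hX3)

set_option maxHeartbeats 1000000 in
private lemma forward_aux (hS : IsLatinSquare S)
    (x x' x'' y y' y'' : R × C × L)
    (hx : x ∈ S) (hx' : x' ∈ S) (hx'' : x'' ∈ S)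
    (hy : y ∈ S) (hy' : y' ∈ S) (hy'' : y'' ∈ S)
    (nxx' : x ≠ x') (nxx'' : x ≠ x'') (nxy : x ≠ y) (nxy' : x ≠ y') (nxy'' : x ≠ y'')
    (nx'x'' : x' ≠ x'') (nx'y : x' ≠ y) (nx'y' : x' ≠ y') (nx'y'' : x' ≠ y'')
    (nx''y : x'' ≠ y) (nx''y' : x'' ≠ y') (nx''y'' : x'' ≠ y'')
    (nyy' : y ≠ y') (nyy'' : y ≠ y'') (ny'y'' : y' ≠ y'')
    (h1 : ∀ u ∈ ({x, x', x''} : Set (R × C × L)), ∀ v ∈ ({y, y', y''} : Set (R × C × L)), LSAdj u v)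
    (h2 : ∀ u ∈ ({x, x', x''} : Set (R × C × L)), ∀ v ∈ ({x, x', x''} : Set (R × C × L)),
        u ≠ v → ¬ LSAdj u v)
    (h3 : ∀ u ∈ ({y, y', y''} : Set (R × C × L)), ∀ v ∈ ({y, y', y''} : Set (R × C × L)),
        u ≠ v → ¬ LSAdj u v) :
    (∃ r1 r2 r3 : R, ∃ c1 c2 c3 : C, ∃ l1 l2 l3 : L,
      r1 ≠ r2 ∧ r1 ≠ r3 ∧ r2 ≠ r3 ∧
      c1 ≠ c2 ∧ c1 ≠ c3 ∧ c2 ≠ c3 ∧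
      l1 ≠ l2 ∧ l1 ≠ l3 ∧ l2 ≠ l3 ∧
      ({x, x', x''} : Set (R × C × L)) = {(r1, c2, l3), (r2, c3, l1), (r3, c1, l2)} ∧
      ({y, y', y''} : Set (R × C × L)) = {(r2, c1, l3), (r3, c2, l1), (r1, c3, l2)}) := by
  have hXA := h2 x (by simp) x' (by simp) nxx'
  have hXB := h2 x (by simp) x'' (by simp) nxx''
  have hXC := h2 x' (by simp) x'' (by simp) nx'x''
  have hX1 : x.1 ≠ x'.1 := fun h => hXA ⟨nxx', Or.inl h⟩
  have hX2 : x.2.1 ≠ x'.2.1 := fun h => hXA ⟨nxx', Or.inr (Or.inl h)⟩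
  have hX3 : x.2.2 ≠ x'.2.2 := fun h => hXA ⟨nxx', Or.inr (Or.inr h)⟩
  have hX4 : x.1 ≠ x''.1 := fun h => hXB ⟨nxx'', Or.inl h⟩
  have hX5 : x.2.1 ≠ x''.2.1 := fun h => hXB ⟨nxx'', Or.inr (Or.inl h)⟩
  have hX6 : x.2.2 ≠ x''.2.2 := fun h => hXB ⟨nxx'', Or.inr (Or.inr h)⟩
  have hX7 : x'.1 ≠ x''.1 := fun h => hXC ⟨nx'x'', Or.inl h⟩
  have hX8 : x'.2.1 ≠ x''.2.1 := fun h => hXC ⟨nx'x'', Or.inr (Or.inl h)⟩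
  have hX9 : x'.2.2 ≠ x''.2.2 := fun h => hXC ⟨nx'x'', Or.inr (Or.inr h)⟩
  have hYA := h3 y (by simp) y' (by simp) nyy'
  have hYB := h3 y (by simp) y'' (by simp) nyy''
  have hYC := h3 y' (by simp) y'' (by simp) ny'y''
  have p1r : y.1 ≠ y'.1 := fun h => hYA ⟨nyy', Or.inl h⟩
  have p1c : y.2.1 ≠ y'.2.1 := fun h => hYA ⟨nyy', Or.inr (Or.inl h)⟩
  have p1l : y.2.2 ≠ y'.2.2 := fun h => hYA ⟨nyy', Or.inr (Or.inr h)⟩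
  have p2r : y.1 ≠ y''.1 := fun h => hYB ⟨nyy'', Or.inl h⟩
  have p2c : y.2.1 ≠ y''.2.1 := fun h => hYB ⟨nyy'', Or.inr (Or.inl h)⟩
  have p2l : y.2.2 ≠ y''.2.2 := fun h => hYB ⟨nyy'', Or.inr (Or.inr h)⟩
  have p3r : y'.1 ≠ y''.1 := fun h => hYC ⟨ny'y'', Or.inl h⟩
  have p3c : y'.2.1 ≠ y''.2.1 := fun h => hYC ⟨ny'y'', Or.inr (Or.inl h)⟩
  have p3l : y'.2.2 ≠ y''.2.2 := fun h => hYC ⟨ny'y'', Or.inr (Or.inr h)⟩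
  have dy := (h1 x (by simp) y (by simp)).2
  have dy' := (h1 x (by simp) y' (by simp)).2
  have dy'' := (h1 x (by simp) y'' (by simp)).2
  have da := (h1 x' (by simp) y (by simp)).2
  have da' := (h1 x' (by simp) y' (by simp)).2
  have da'' := (h1 x' (by simp) y'' (by simp)).2
  have db := (h1 x'' (by simp) y (by simp)).2
  have db' := (h1 x'' (by simp) y' (by simp)).2
  have db'' := (h1 x'' (by simp) y'' (by simp)).2
  rcases dy with h | h | h
  · rcases dy' with h' | h' | h'
    · exact absurd (h.symm.trans h') p1r
    · rcases dy'' with h'' | h'' | h''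
      · exact absurd (h.symm.trans h'') p2r
      · exact absurd (h'.symm.trans h'') p3c
      · -- B1: (ya,yb,yc) = (y,y',y'')
        exact core hS hx hy hy' hy'' nxy nxy' nxy''
          hX1 hX2 hX3 hX4 hX5 hX6 hX7 hX8 hX9
          p1r p1c p1l p2r p2c p2l p3r p3c p3l
          h h' h'' da da' da'' db db' db''
    · rcases dy'' with h'' | h'' | h''
      · exact absurd (h.symm.trans h'') p2r
      · -- B2: (ya,yb,yc) = (y,y'',y')
        obtain ⟨r1, r2, r3, c1, c2, c3, l1, l2, l3, a1, a2, a3, a4, a5, a6, a7, a8, a9,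
            hXset, hYset⟩ :=
          core hS hx hy hy'' hy' nxy nxy'' nxy'
            hX1 hX2 hX3 hX4 hX5 hX6 hX7 hX8 hX9
            p2r p2c p2l p1r p1c p1l p3r.symm p3c.symm p3l.symm
            h h'' h' da da'' da' db db'' db'
        refine ⟨r1, r2, r3, c1, c2, c3, l1, l2, l3, a1, a2, a3, a4, a5, a6, a7, a8, a9,
          hXset, ?_⟩
        rw [← hYset]; ext p
        simp only [Set.mem_insert_iff, Set.mem_singleton_iff]
        exact or_congr_right or_comm
      · exact absurd (h'.symm.trans h'') p3l
  · rcases dy' with h' | h' | h'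
    · rcases dy'' with h'' | h'' | h''
      · exact absurd (h'.symm.trans h'') p3r
      · exact absurd (h.symm.trans h'') p2c
      · -- B3: (ya,yb,yc) = (y',y,y'')
        obtain ⟨r1, r2, r3, c1, c2, c3, l1, l2, l3, a1, a2, a3, a4, a5, a6, a7, a8, a9,
            hXset, hYset⟩ :=
          core hS hx hy' hy hy'' nxy' nxy nxy''
            hX1 hX2 hX3 hX4 hX5 hX6 hX7 hX8 hX9
            p1r.symm p1c.symm p1l.symm p3r p3c p3l p2r p2c p2l
            h' h h'' da' da da'' db' db db''
        refine ⟨r1, r2, r3, c1, c2, c3, l1, l2, l3, a1, a2, a3, a4, a5, a6, a7, a8, a9,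
          hXset, ?_⟩
        rw [← hYset]; ext p
        simp only [Set.mem_insert_iff, Set.mem_singleton_iff]
        exact or_left_comm
    · exact absurd (h.symm.trans h') p1c
    · rcases dy'' with h'' | h'' | h''
      · -- B4: (ya,yb,yc) = (y'',y,y')
        obtain ⟨r1, r2, r3, c1, c2, c3, l1, l2, l3, a1, a2, a3, a4, a5, a6, a7, a8, a9,
            hXset, hYset⟩ :=
          core hS hx hy'' hy hy' nxy'' nxy nxy'
            hX1 hX2 hX3 hX4 hX5 hX6 hX7 hX8 hX9
            p2r.symm p2c.symm p2l.symm p3r.symm p3c.symm p3l.symm p1r p1c p1l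
            h'' h h' da'' da da' db'' db db'
        refine ⟨r1, r2, r3, c1, c2, c3, l1, l2, l3, a1, a2, a3, a4, a5, a6, a7, a8, a9,
          hXset, ?_⟩
        rw [← hYset]; ext p
        simp only [Set.mem_insert_iff, Set.mem_singleton_iff]
        exact or_rotate.trans or_rotate
      · exact absurd (h.symm.trans h'') p2c
      · exact absurd (h'.symm.trans h'') p3l
  · rcases dy' with h' | h' | h'
    · rcases dy'' with h'' | h'' | h''
      · exact absurd (h'.symm.trans h'') p3r
      · -- B5: (ya,yb,yc) = (y',y'',y)
        obtain ⟨r1, r2, r3, c1, c2, c3, l1, l2, l3, a1, a2, a3, a4, a5, a6, a7, a8, a9,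
            hXset, hYset⟩ :=
          core hS hx hy' hy'' hy nxy' nxy'' nxy
            hX1 hX2 hX3 hX4 hX5 hX6 hX7 hX8 hX9
            p3r p3c p3l p1r.symm p1c.symm p1l.symm p2r.symm p2c.symm p2l.symm
            h' h'' h da' da'' da db' db'' db
        refine ⟨r1, r2, r3, c1, c2, c3, l1, l2, l3, a1, a2, a3, a4, a5, a6, a7, a8, a9,
          hXset, ?_⟩
        rw [← hYset]; ext p
        simp only [Set.mem_insert_iff, Set.mem_singleton_iff]
        exact or_rotate
      · exact absurd (h.symm.trans h'') p2l
    · rcases dy'' with h'' | h'' | h''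
      · -- B6: (ya,yb,yc) = (y'',y',y)
        obtain ⟨r1, r2, r3, c1, c2, c3, l1, l2, l3, a1, a2, a3, a4, a5, a6, a7, a8, a9,
            hXset, hYset⟩ :=
          core hS hx hy'' hy' hy nxy'' nxy' nxy
            hX1 hX2 hX3 hX4 hX5 hX6 hX7 hX8 hX9
            p3r.symm p3c.symm p3l.symm p2r.symm p2c.symm p2l.symm p1r.symm p1c.symm p1l.symm
            h'' h' h da'' da' da db'' db' db
        refine ⟨r1, r2, r3, c1, c2, c3, l1, l2, l3, a1, a2, a3, a4, a5, a6, a7, a8, a9,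
          hXset, ?_⟩
        rw [← hYset]; ext p
        simp only [Set.mem_insert_iff, Set.mem_singleton_iff]
        exact or_rotate.trans or_left_comm
      · exact absurd (h'.symm.trans h'') p3c
      · exact absurd (h.symm.trans h'') p2l
    · exact absurd (h.symm.trans h') p1l

end

theorem stmt0 {R C L : Type*} (S : Set (R × C × L)) (hS : IsLatinSquare S)
    (x x' x'' y y' y'' : R × C × L)
    (hx : x ∈ S) (hx' : x' ∈ S) (hx'' : x'' ∈ S)
    (hy : y ∈ S) (hy' : y' ∈ S) (hy'' : y'' ∈ S)
    (hdist : ([x, x', x'', y, y', y''] : List (R × C × L)).Nodup) :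
    ((∀ u ∈ ({x, x', x''} : Set (R × C × L)), ∀ v ∈ ({y, y', y''} : Set (R × C × L)), LSAdj u v) ∧
      (∀ u ∈ ({x, x', x''} : Set (R × C × L)), ∀ v ∈ ({x, x', x''} : Set (R × C × L)),
        u ≠ v → ¬ LSAdj u v) ∧
      (∀ u ∈ ({y, y', y''} : Set (R × C × L)), ∀ v ∈ ({y, y', y''} : Set (R × C × L)),
        u ≠ v → ¬ LSAdj u v)) ↔
    (∃ r1 r2 r3 : R, ∃ c1 c2 c3 : C, ∃ l1 l2 l3 : L,
      r1 ≠ r2 ∧ r1 ≠ r3 ∧ r2 ≠ r3 ∧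
      c1 ≠ c2 ∧ c1 ≠ c3 ∧ c2 ≠ c3 ∧
      l1 ≠ l2 ∧ l1 ≠ l3 ∧ l2 ≠ l3 ∧
      ({x, x', x''} : Set (R × C × L)) = {(r1, c2, l3), (r2, c3, l1), (r3, c1, l2)} ∧
      ({y, y', y''} : Set (R × C × L)) = {(r2, c1, l3), (r3, c2, l1), (r1, c3, l2)}) := by
  simp only [List.nodup_cons, List.mem_cons, List.not_mem_nil, or_false, not_or,
    List.nodup_nil, and_true] at hdist
  obtain ⟨⟨nxx', nxx'', nxy, nxy', nxy''⟩, ⟨nx'x'', nx'y, nx'y', nx'y''⟩,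
    ⟨nx''y, nx''y', nx''y''⟩, ⟨nyy', nyy''⟩, ny'y'', -⟩ := hdist
  constructor
  · rintro ⟨h1, h2, h3⟩
    exact forward_aux hS x x' x'' y y' y'' hx hx' hx'' hy hy' hy'' nxx' nxx'' nxy nxy' nxy''
      nx'x'' nx'y nx'y' nx'y'' nx''y nx''y' nx''y'' nyy' nyy'' ny'y'' h1 h2 h3
  · rintro ⟨r1, r2, r3, c1, c2, c3, l1, l2, l3, d12, d13, d23, e12, e13, e23,
      f12, f13, f23, hXs, hYs⟩
    refine ⟨?_, ?_, ?_⟩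
    · intro u hu v hv
      rw [hXs] at hu; rw [hYs] at hv
      simp only [Set.mem_insert_iff, Set.mem_singleton_iff] at hu hv
      rcases hu with rfl | rfl | rfl <;> rcases hv with rfl | rfl | rfl <;>
        exact ⟨by simp [Prod.ext_iff]; tauto, by simp⟩
    · intro u hu v hv huv
      rw [hXs] at hu hv
      simp only [Set.mem_insert_iff, Set.mem_singleton_iff] at hu hv
      rcases hu with rfl | rfl | rfl <;> rcases hv with rfl | rfl | rfl <;>
        first
          | exact fun _ => huv rfl
          | (rintro ⟨-, h | h | h⟩ <;> simp_all)
    · intro u hu v hv huv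
      rw [hYs] at hu hv
      simp only [Set.mem_insert_iff, Set.mem_singleton_iff] at hu hv
      rcases hu with rfl | rfl | rfl <;> rcases hv with rfl | rfl | rfl <;>
        first
          | exact fun _ => huv rfl
          | (rintro ⟨-, h | h | h⟩ <;> simp_all)
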